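/- Let α, β, γ, δ be real numbers with 0 < α < 2π, 0 < β < 2π, 0 < γ ≤ π, 0 < δ ≤ π, and suppose sin(α/2)·sin(δ − β/2) = sin(β/2)·sin(γ − α/2). Then α < 2γ if and only if β < 2δ. -/
import Mathlib


open Real

/-- On `(-π, π)`, `sin` is positive iff the argument is positive. -/
lemma sin_pos_iff_aux {x : ℝ} (h1 : -π < x) (h2 : x < π) : 0 < Real.sin x ↔ 0 < x := by
  constructor
  · intro hs
    by_contra hx
    push_neg at hx
    have := Real.sin_nonpos_of_nonpos_of_neg_pi_le hx h1.le
    linarith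
  · intro hx
    exact Real.sin_pos_of_pos_of_lt_pi hx h2

/-- Trigonometric content of Lemma 3.20: if the angles lie in `(0,2π)` with
`γ, δ ≤ π` and Coolsaet's equality holds, then `α < 2γ ↔ β < 2δ`. -/
theorem stmt_10 (α β γ δ : ℝ)
    (hα1 : 0 < α) (hα2 : α < 2 * π) (hβ1 : 0 < β) (hβ2 : β < 2 * π)
    (hγ1 : 0 < γ) (hγ2 : γ ≤ π) (hδ1 : 0 < δ) (hδ2 : δ ≤ π)
    (h : Real.sin (α / 2) * Real.sin (δ - β / 2) =
      Real.sin (β / 2) * Real.sin (γ - α / 2)) :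
    α < 2 * γ ↔ β < 2 * δ := by
  have hpi := Real.pi_pos
  have hsa : 0 < Real.sin (α / 2) :=
    Real.sin_pos_of_pos_of_lt_pi (by linarith) (by linarith)
  have hsb : 0 < Real.sin (β / 2) :=
    Real.sin_pos_of_pos_of_lt_pi (by linarith) (by linarith)
  have h1 : 0 < Real.sin (γ - α / 2) ↔ α < 2 * γ := by
    rw [sin_pos_iff_aux (by linarith) (by linarith)]
    constructor <;> intro <;> linarith
  have h2 : 0 < Real.sin (δ - β / 2) ↔ β < 2 * δ := by
    rw [sin_pos_iff_aux (by linarith) (by linarith)]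
    constructor <;> intro <;> linarith
  rw [← h1, ← h2]
  constructor <;> intro hx
  · nlinarith
  · nlinarith
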